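/- Let a, b ∈ ℐ be distinct inner indices that belong to exactly the same vertices, i.e., {m : a ∈ v_m} = {m : b ∈ v_m}. Then the representable set 𝕋_V(θ) equals the representable set 𝕋_{V⊖a}(θ'), where V⊖a = (v_1 \ {a}, …, v_M \ {a}) deletes a from every vertex, the inner index set becomes ℐ \ {a}, and θ' is defined on ι \ {a} by θ'(b) = θ(a) · θ(b) and θ'(c) = θ(c) for all other indices c. -/
import Mathlib


noncomputable section

noncomputable section

/-- The space of real tensors indexed by the indices in the vertex `v`, where an index
`a` (either outer, in `ιO`, or inner, in `ιI`) has dimension `Sum.elim θO θI a`. -/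
def Tensor {ιO ιI : Type*} (θO : ιO → ℕ) (θI : ιI → ℕ) (v : Finset (ιO ⊕ ιI)) : Type _ :=
  ((a : v) → Fin (Sum.elim θO θI a.1)) → ℝ

/-- The combined assignment of an outer assignment `x` and an inner assignment `y`. -/
def combine {ιO ιI : Type*} (θO : ιO → ℕ) (θI : ιI → ℕ)
    (x : (a : ιO) → Fin (θO a)) (y : (a : ιI) → Fin (θI a)) :
    (a : ιO ⊕ ιI) → Fin (Sum.elim θO θI a)
  | .inl o => x o
  | .inr i => y i

/-- The contraction `F_V` of the tensors `U m` along the vertex list `V`: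
`F_V(U)(x) = Σ_y Π_m U m ((x,y)|_{V m})`. -/
def contract {ιO ιI : Type*} [Fintype ιO] [Fintype ιI] [DecidableEq ιO] [DecidableEq ιI]
    (θO : ιO → ℕ) (θI : ιI → ℕ) {κ : Type*} [Fintype κ]
    (V : κ → Finset (ιO ⊕ ιI)) (U : (m : κ) → Tensor θO θI (V m)) :
    ((a : ιO) → Fin (θO a)) → ℝ :=
  fun x => ∑ y : (a : ιI) → Fin (θI a), ∏ m, U m (fun a => combine θO θI x y a.1)

/-- The representable set `𝕋_V(θ)`: the image of the contraction map `F_V`. -/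
def reprSet {ιO ιI : Type*} [Fintype ιO] [Fintype ιI] [DecidableEq ιO] [DecidableEq ιI]
    (θO : ιO → ℕ) (θI : ιI → ℕ) {κ : Type*} [Fintype κ] (V : κ → Finset (ιO ⊕ ιI)) :
    Set (((a : ιO) → Fin (θO a)) → ℝ) :=
  Set.range (contract θO θI V)

end



section aux
variable {ιI : Type*} [DecidableEq ιI] (θI : ιI → ℕ) (a b : ιI)

def mθ : {x : ιI // x ≠ a} → ℕ := fun c => if c.1 = b then θI a * θI b else θI c.1

lemma mθ_pos {c : {x : ιI // x ≠ a}} (h : c.1 = b) : mθ θI a b c = θI a * θI c.1 := by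
  unfold mθ; rw [if_pos h, h]

lemma mθ_neg {c : {x : ιI // x ≠ a}} (h : c.1 ≠ b) : mθ θI a b c = θI c.1 := by
  unfold mθ; rw [if_neg h]

lemma cast_self {n : ℕ} (h : n = n) (x : Fin n) : Fin.cast h x = x := rfl

lemma cast_cast_self {n m : ℕ} (h1 : n = m) (h2 : m = n) (x : Fin n) :
    Fin.cast h2 (Fin.cast h1 x) = x := by subst h1; rfl

def enc (y : (c : ιI) → Fin (θI c)) : (c : {x : ιI // x ≠ a}) → Fin (mθ θI a b c) :=
  fun c =>
    if h : c.1 = b then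
      Fin.cast (mθ_pos θI a b h).symm (finProdFinEquiv (y a, y c.1))
    else Fin.cast (mθ_neg θI a b h).symm (y c.1)

def dec (hab : a ≠ b) (y' : (c : {x : ιI // x ≠ a}) → Fin (mθ θI a b c)) :
    (c : ιI) → Fin (θI c) :=
  fun c =>
    if h : c = a then
      Fin.cast (congrArg θI h.symm)
        (finProdFinEquiv.symm (Fin.cast (mθ_pos θI a b rfl) (y' ⟨b, hab.symm⟩))).1
    else if h2 : c = b then
      Fin.cast (congrArg θI h2.symm)
        (finProdFinEquiv.symm (Fin.cast (mθ_pos θI a b rfl) (y' ⟨b, hab.symm⟩))).2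
    else Fin.cast (mθ_neg θI a b h2) (y' ⟨c, h⟩)

lemma dec_enc (hab : a ≠ b) (y : (c : ιI) → Fin (θI c)) : dec θI a b hab (enc θI a b y) = y := by
  funext c
  unfold dec enc
  by_cases h : c = a
  · subst h
    rw [dif_pos rfl, dif_pos rfl, cast_cast_self, Equiv.symm_apply_apply, cast_self]
  · rw [dif_neg h]
    by_cases h2 : c = b
    · subst h2
      rw [dif_pos rfl, dif_pos rfl, cast_cast_self, Equiv.symm_apply_apply, cast_self]
    · rw [dif_neg h2, dif_neg h2, cast_cast_self]

lemma enc_dec (hab : a ≠ b) (y' : (c : {x : ιI // x ≠ a}) → Fin (mθ θI a b c)) :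
    enc θI a b (dec θI a b hab y') = y' := by
  funext c
  obtain ⟨c, hca⟩ := c
  unfold enc dec
  by_cases h : c = b
  · subst h
    rw [dif_pos rfl, dif_pos rfl, dif_neg hca, dif_pos rfl, cast_self, cast_self,
      Prod.mk.eta, Equiv.apply_symm_apply, cast_cast_self]
  · rw [dif_neg h, dif_neg hca, dif_neg h, cast_cast_self]

def eqv (hab : a ≠ b) :
    ((c : ιI) → Fin (θI c)) ≃ ((c : {x : ιI // x ≠ a}) → Fin (mθ θI a b c)) :=
  ⟨enc θI a b, dec θI a b hab, dec_enc θI a b hab, enc_dec θI a b hab⟩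

end aux


noncomputable section
section aux2
variable {ιO ιI : Type*} [Fintype ιO] [Fintype ιI] [DecidableEq ιO] [DecidableEq ιI]
  (θO : ιO → ℕ) (θI : ιI → ℕ) (a b : ιI) {M : ℕ} (V : Fin M → Finset (ιO ⊕ ιI))

def V' : Fin M → Finset (ιO ⊕ {x : ιI // x ≠ a}) := fun m =>
  Finset.univ.filter (fun c : ιO ⊕ {x : ιI // x ≠ a} => Sum.map id Subtype.val c ∈ V m)

lemma mem_V' {m : Fin M} {q : ιO ⊕ {x : ιI // x ≠ a}} :
    q ∈ V' a V m ↔ Sum.map id Subtype.val q ∈ V m := by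
  simp [V']

def transfer (hab : a ≠ b) (hsame : ∀ m : Fin M, Sum.inr a ∈ V m ↔ Sum.inr b ∈ V m)
    (m : Fin M) (z' : (q : (V' a V m : Finset _)) → Fin (Sum.elim θO (mθ θI a b) q.1)) :
    (p : (V m : Finset _)) → Fin (Sum.elim θO θI p.1) := fun p =>
  match p with
  | ⟨Sum.inl o, _⟩ => z' ⟨Sum.inl o, (mem_V' a V).2 (by simpa using ‹Sum.inl o ∈ V m›)⟩
  | ⟨Sum.inr i, hp⟩ =>
    if h : i = a then
      Fin.cast (congrArg θI h.symm)
        (finProdFinEquiv.symm (Fin.cast (mθ_pos θI a b rfl)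
          (z' ⟨Sum.inr ⟨b, hab.symm⟩, (mem_V' a V).2 (by simpa using (hsame m).1 (h ▸ hp))⟩))).1
    else if h2 : i = b then
      Fin.cast (congrArg θI h2.symm)
        (finProdFinEquiv.symm (Fin.cast (mθ_pos θI a b rfl)
          (z' ⟨Sum.inr ⟨b, hab.symm⟩, (mem_V' a V).2 (by simpa using h2 ▸ hp)⟩))).2
    else Fin.cast (mθ_neg θI a b (c := ⟨i, h⟩) h2)
      (z' ⟨Sum.inr ⟨i, h⟩, (mem_V' a V).2 (by simpa using hp)⟩)

def transfer' (hsame : ∀ m : Fin M, Sum.inr a ∈ V m ↔ Sum.inr b ∈ V m)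
    (m : Fin M) (z : (p : (V m : Finset _)) → Fin (Sum.elim θO θI p.1)) :
    (q : (V' a V m : Finset _)) → Fin (Sum.elim θO (mθ θI a b) q.1) := fun q =>
  match q with
  | ⟨Sum.inl o, hq⟩ => z ⟨Sum.inl o, by simpa using (mem_V' a V).1 hq⟩
  | ⟨Sum.inr c, hq⟩ =>
    if h : c.1 = b then
      Fin.cast (mθ_pos θI a b h).symm
        (finProdFinEquiv (z ⟨Sum.inr a, (hsame m).2 (h ▸ (by simpa using (mem_V' a V).1 hq))⟩,
          z ⟨Sum.inr c.1, by simpa using (mem_V' a V).1 hq⟩))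
    else Fin.cast (mθ_neg θI a b h).symm (z ⟨Sum.inr c.1, by simpa using (mem_V' a V).1 hq⟩)

lemma L1 (hab : a ≠ b) (hsame : ∀ m : Fin M, Sum.inr a ∈ V m ↔ Sum.inr b ∈ V m)
    (m : Fin M) (x : (c : ιO) → Fin (θO c)) (y : (c : ιI) → Fin (θI c)) :
    transfer θO θI a b V hab hsame m
        (fun q : (V' a V m : Finset _) => combine θO (mθ θI a b) x (enc θI a b y) q.1) =
      fun p : (V m : Finset _) => combine θO θI x y p.1 := by
  funext p
  obtain ⟨p, hp⟩ := p
  cases p with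
  | inl o => rfl
  | inr i => exact congrFun (dec_enc θI a b hab y) i

lemma L2 (hab : a ≠ b) (hsame : ∀ m : Fin M, Sum.inr a ∈ V m ↔ Sum.inr b ∈ V m)
    (m : Fin M) (x : (c : ιO) → Fin (θO c))
    (y' : (c : {x : ιI // x ≠ a}) → Fin (mθ θI a b c)) :
    transfer' θO θI a b V hsame m
        (fun p : (V m : Finset _) => combine θO θI x (dec θI a b hab y') p.1) =
      fun q : (V' a V m : Finset _) => combine θO (mθ θI a b) x y' q.1 := by
  funext q
  obtain ⟨q, hq⟩ := q
  cases q with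
  | inl o => rfl
  | inr c => exact congrFun (enc_dec θI a b hab y') c

end aux2
end



/-- Proposition 3, merging a double hyperedge: if two distinct inner
indices `a, b` belong to exactly the same vertices, then the representable set `𝕋_V(θ)`
equals the representable set of `V ⊖ a` (deleting `a` from every vertex) over the inner
index set `ιI \ {a}`, where the dimension of `b` becomes `θI a * θI b` and all other
dimensions are unchanged. -/
theorem reprSet_eq_of_same_hyperedge {ιO ιI : Type*} [Fintype ιO] [Fintype ιI]
    [DecidableEq ιO] [DecidableEq ιI]
    (θO : ιO → ℕ) (θI : ιI → ℕ) {M : ℕ} (V : Fin M → Finset (ιO ⊕ ιI))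
    (a b : ιI) (hab : a ≠ b)
    (hsame : ∀ m : Fin M, Sum.inr a ∈ V m ↔ Sum.inr b ∈ V m) :
    reprSet θO θI V =
      reprSet θO (fun c : {x : ιI // x ≠ a} => if c.1 = b then θI a * θI b else θI c.1)
        (fun m => Finset.univ.filter
          (fun c : ιO ⊕ {x : ιI // x ≠ a} => Sum.map id Subtype.val c ∈ V m)) := by
  show reprSet θO θI V = reprSet θO (mθ θI a b) (V' a V)
  apply Set.Subset.antisymm
  · rintro t ⟨U, rfl⟩
    refine ⟨fun m z' => U m (transfer θO θI a b V hab hsame m z'), ?_⟩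
    funext x
    show (∑ y', ∏ m, U m (transfer θO θI a b V hab hsame m
        (fun q => combine θO (mθ θI a b) x y' q.1))) =
      ∑ y, ∏ m, U m (fun p => combine θO θI x y p.1)
    rw [← Equiv.sum_comp (eqv θI a b hab)]
    refine Finset.sum_congr rfl fun y _ => Finset.prod_congr rfl fun m _ => ?_
    exact congrArg (U m) (L1 θO θI a b V hab hsame m x y)
  · rintro t ⟨U', rfl⟩
    refine ⟨fun m z => U' m (transfer' θO θI a b V hsame m z), ?_⟩
    funext x
    show (∑ y, ∏ m, U' m (transfer' θO θI a b V hsame m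
        (fun p => combine θO θI x y p.1))) =
      ∑ y', ∏ m, U' m (fun q => combine θO (mθ θI a b) x y' q.1)
    rw [← Equiv.sum_comp (eqv θI a b hab).symm]
    refine Finset.sum_congr rfl fun y' _ => Finset.prod_congr rfl fun m _ => ?_
    exact congrArg (U' m) (L2 θO θI a b V hab hsame m x y')
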